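/- arXiv:cs/0612089 — 2 statements merged into one kernel-verified Lean document; each statement's English description precedes it below -/
import Mathlib

section
/- There exists a 2-tag system T over the alphabet {x, ẋ, x̄₁, ẋ̄₁, x̄₂ : x ∈ {0,1}} with 6 rules such that for any input word w = x̄₀ẋ̄₀x₁x₂…x_l (encoding a barred leading pair followed by l plain symbols), after exactly ⌊|w|/2⌋ + 1 computation steps the remaining dataword is a single symbol of the form ẋ̄₁ (a dotted barred symbol) if |w| is odd, and a single symbol of the form x̄₂ if |w| is even. That is, T decides the parity of |w| in ⌊|w|/2⌋ + 1 steps. -/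
/-- Alphabet of the parity-testing 2-tag system: for each binary value we have
a barred symbol x̄, a dotted barred symbol ẋ̄, plain x, dotted ẋ, and the
auxiliary symbols x̄₁, ẋ̄₁ and x̄₂. -/
inductive PSym : Type
  | bar : Bool → PSym
  | dotbar : Bool → PSym
  | plain : Bool → PSym
  | dot : Bool → PSym
  | bar1 : Bool → PSym
  | dotbar1 : Bool → PSym
  | bar2 : Bool → PSym
  deriving DecidableEq

open PSym

/-- The six rules x̄ → x̄₁ẋ̄₁, x → ε, x̄₁ → x̄₂ (for x ∈ {0,1}); all other
symbols have no rule. -/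
def PRule : PSym → Option (List PSym)
  | bar x => some [bar1 x, dotbar1 x]
  | plain _ => some []
  | bar1 x => some [bar2 x]
  | _ => none

/-- One (partial) 2-tag computation step: delete the two leftmost symbols and
append the rule for the first of them; undefined if there is no such rule or
fewer than two symbols. -/
def pStep : List PSym → Option (List PSym)
  | a :: _ :: t => (PRule a).map (fun α => t ++ α)
  | _ => none

/-- Iterated partial steps. -/
def pIter : ℕ → List PSym → Option (List PSym)
  | 0, w => some w
  | n + 1, w => pStep w >>= pIter n

lemma plainIter : ∀ (ys : List Bool) (rest : List PSym),
    pIter (ys.length / 2) (ys.map plain ++ rest) =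
      some ((ys.drop (2 * (ys.length / 2))).map plain ++ rest)
  | [], rest => by simp [pIter]
  | [a], rest => by simp [pIter]
  | a :: b :: t, rest => by
      have ih := plainIter t rest
      have h2 : (a :: b :: t).length / 2 = t.length / 2 + 1 := by
        simp; omega
      rw [h2]
      show pStep _ >>= pIter (t.length / 2) = _
      rw [show (List.map plain (a :: b :: t) ++ rest : List PSym) =
            plain a :: plain b :: (t.map plain ++ rest) from rfl]
      rw [show pStep (plain a :: plain b :: (t.map plain ++ rest)) =
            some (t.map plain ++ rest) from by simp [pStep, PRule]]
      show pIter (t.length / 2) (t.map plain ++ rest) = _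
      rw [ih]
      rw [show 2 * (t.length / 2 + 1) = 2 * (t.length / 2) + 2 from by ring,
        ← List.drop_drop]
      simp

lemma pIter_add (m n : ℕ) : ∀ w, pIter (m + n) w = pIter m w >>= pIter n := by
  induction m with
  | zero => simp [pIter]
  | succ k ih =>
      intro w
      rw [show k + 1 + n = (k + n) + 1 from by ring]
      show pStep w >>= pIter (k + n) = (pStep w >>= pIter k) >>= pIter n
      cases pStep w with
      | none => rfl
      | some w' => exact ih w'

/-- The 2-tag system with the six rules `PRule` decides the parity of the
length of an input word w = x̄₀ẋ̄₀x₁…x_l in exactly ⌊|w|/2⌋ + 1 steps: the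
remaining dataword is a single dotted barred symbol ẋ̄₁ if |w| is odd, and a
single symbol x̄₂ if |w| is even. -/
theorem stmt2 (x0 : Bool) (xs : List Bool) :
    let w : List PSym := bar x0 :: dotbar x0 :: xs.map plain
    (Odd w.length → ∃ y, pIter (w.length / 2 + 1) w = some [dotbar1 y]) ∧
    (Even w.length → ∃ y, pIter (w.length / 2 + 1) w = some [bar2 y]) := by
  intro w
  set l := xs.length with hl
  have hlen : w.length = l + 2 := by simp [w]; rfl
  have hdiv : w.length / 2 + 1 = 1 + (l / 2 + 1) := by
    rw [hlen]; omega
  have hstep1 : pIter 1 w = some (xs.map plain ++ [bar1 x0, dotbar1 x0]) := by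
    show pStep w >>= pIter 0 = _
    simp [w, pStep, PRule, pIter]
  have key : pIter (w.length / 2 + 1) w =
      pIter 1 ((xs.drop (2 * (l / 2))).map plain ++ [bar1 x0, dotbar1 x0]) := by
    rw [hdiv, pIter_add, hstep1]
    show pIter (l / 2 + 1) (xs.map plain ++ [bar1 x0, dotbar1 x0]) = _
    rw [pIter_add, hl, plainIter]
    rfl
  constructor
  · intro hodd
    have hol : l % 2 = 1 := by
      rw [hlen] at hodd
      rcases hodd with ⟨k, hk⟩; omega
    have hlen1 : ((xs.drop (2 * (l / 2))).map plain).length = 1 := by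
      simp; omega
    obtain ⟨z, hz⟩ := List.length_eq_one_iff.mp hlen1
    obtain ⟨c, hc⟩ : ∃ c, z = plain c := by
      rcases List.map_eq_cons_iff.mp hz with ⟨c, cs, _, hc, _⟩
      exact ⟨c, hc.symm⟩
    refine ⟨x0, ?_⟩
    rw [key, hz, hc]
    show pStep _ >>= pIter 0 = _
    simp [pStep, PRule, pIter]
  · intro heven
    have hel : l % 2 = 0 := by
      rw [hlen] at heven
      rcases heven with ⟨k, hk⟩; omega
    have hlen0 : ((xs.drop (2 * (l / 2))).map plain) = [] := by
      rw [List.map_eq_nil_iff, List.drop_eq_nil_iff]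
      omega
    refine ⟨x0, ?_⟩
    rw [key, hlen0]
    show pStep _ >>= pIter 0 = _
    simp [pStep, PRule, pIter]
end

section
/- For all natural numbers l ≥ 0 and 0 ≤ c ≤ 2^⌈log₂(l+1)⌉: if l + c < 2^⌈log₂(l+1)⌉ then 2^⌈log₂(l+c+1)⌉ = 2^⌈log₂(l+1)⌉, and if l + c ≥ 2^⌈log₂(l+1)⌉ then 2^⌈log₂(l+c+1)⌉ = 2·2^⌈log₂(l+1)⌉. In other words, after appending a word of length c ≤ counter value, the counter invariant (counter = least power of two exceeding dataword length) is restored either by keeping the counter or doubling it exactly once. -/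
/-- Restoring the counter invariant after an append of length c ≤ counter:
if l + c < 2^⌈log₂(l+1)⌉ the counter is unchanged, and otherwise it doubles:
2^⌈log₂(l+c+1)⌉ = 2·2^⌈log₂(l+1)⌉. -/
theorem stmt10 (l c : ℕ) (hc : c ≤ 2 ^ Nat.clog 2 (l + 1)) :
    (l + c < 2 ^ Nat.clog 2 (l + 1) →
      2 ^ Nat.clog 2 (l + c + 1) = 2 ^ Nat.clog 2 (l + 1)) ∧
    (2 ^ Nat.clog 2 (l + 1) ≤ l + c →
      2 ^ Nat.clog 2 (l + c + 1) = 2 * 2 ^ Nat.clog 2 (l + 1)) := by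
  have hb : 1 < 2 := one_lt_two
  set k := Nat.clog 2 (l + 1) with hk
  constructor
  · intro h
    have h1 : Nat.clog 2 (l + c + 1) ≤ k :=
      (Nat.clog_le_iff_le_pow hb).mpr (by omega)
    have h2 : k ≤ Nat.clog 2 (l + c + 1) :=
      Nat.clog_mono_right 2 (by omega)
    rw [le_antisymm h1 h2]
  · intro h
    have hl : l + 1 ≤ 2 ^ k := Nat.le_pow_clog hb _
    have h1 : Nat.clog 2 (l + c + 1) ≤ k + 1 := by
      apply (Nat.clog_le_iff_le_pow hb).mpr
      rw [pow_succ]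
      omega
    have h2 : k + 1 ≤ Nat.clog 2 (l + c + 1) := by
      have := (Nat.lt_clog_iff_pow_lt hb (x := l + c + 1) (y := k)).mpr (by omega)
      omega
    rw [le_antisymm h1 h2, pow_succ, mul_comm]
end
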